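/- arXiv:0807.3727 — 2 statements merged into one kernel-verified Lean document; each statement's English description precedes it below -/
import Mathlib

section
/- Let G be a group, H a subgroup, and let M ≤ G be the intersection of all conjugates gLg⁻¹ of a finite-index subgroup L of G. If A is a subgroup such that g⁻¹Ag ∩ L = n(g⁻¹Ag) for every g ∈ G (where nK denotes the subgroup generated by n-th powers of elements of K for an abelian subgroup K), and A is abelian, then M is a finite-index normal subgroup of G with A ∩ M = nA. -/
/-- For an (abelian) subgroup `A` of `G`, the subgroup generated by `n`-th powers of
elements of `A`. -/
def powSubgroup {G : Type*} [Group G] (n : ℕ) (A : Subgroup G) : Subgroup G :=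
  Subgroup.closure {x : G | ∃ a ∈ A, x = a ^ n}

/-- The conjugate subgroup `g⁻¹ A g`. -/
def conjSubgroup {G : Type*} [Group G] (g : G) (A : Subgroup G) : Subgroup G :=
  A.map (MulAut.conj g⁻¹).toMonoidHom

lemma conj_pow_eq {G : Type*} [Group G] (g a : G) (n : ℕ) :
    (g⁻¹ * a * g) ^ n = g⁻¹ * a ^ n * g := by
  induction n with
  | zero => group
  | succ k ih => rw [pow_succ, pow_succ, ih]; group

lemma conjSubgroup_one {G : Type*} [Group G] (A : Subgroup G) : conjSubgroup 1 A = A := by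
  ext x
  simp [conjSubgroup]

/-- The normal core of an `n`-characteristic finite-index subgroup is a normal,
finite-index, `n`-characteristic subgroup. -/
theorem core_is_n_characteristic {G : Type*} [Group G] (L M A : Subgroup G) (n : ℕ)
    (hn : 0 < n) (hL : L.FiniteIndex)
    (hM : (M : Set G) = ⋂ g : G, (fun x => g * x * g⁻¹) '' (L : Set G))
    (hab : ∀ a ∈ A, ∀ b ∈ A, a * b = b * a)
    (hchar : ∀ g : G, conjSubgroup g A ⊓ L = powSubgroup n (conjSubgroup g A)) :
    M.Normal ∧ M.FiniteIndex ∧ A ⊓ M = powSubgroup n A := by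
  have hmem : ∀ x : G, x ∈ M ↔ ∀ g : G, g⁻¹ * x * g ∈ L := by
    intro x
    constructor
    · intro hx g
      have := (Set.ext_iff.mp hM x).mp hx
      rw [Set.mem_iInter] at this
      obtain ⟨l, hl, hxl⟩ := this g
      subst hxl
      have h1 : g⁻¹ * (g * l * g⁻¹) * g = l := by group
      rw [h1]; exact hl
    · intro h
      have : x ∈ (M : Set G) := by
        rw [hM, Set.mem_iInter]
        intro g
        exact ⟨g⁻¹ * x * g, h g, by group⟩
      exact this
  have hMcore : M = L.normalCore := by
    ext x
    rw [hmem]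
    constructor
    · intro h b
      simpa using h b⁻¹
    · intro h g
      simpa using h g⁻¹
  have hnormal : M.Normal := hMcore ▸ Subgroup.normalCore_normal L
  have hfi : M.FiniteIndex := hMcore ▸ Subgroup.finiteIndex_normalCore L
  refine ⟨hnormal, hfi, ?_⟩
  apply le_antisymm
  · intro x hx
    obtain ⟨hxA, hxM⟩ := hx
    have hxL : x ∈ L := by simpa using (hmem x).mp hxM 1
    have : x ∈ conjSubgroup 1 A ⊓ L := by
      rw [conjSubgroup_one]; exact ⟨hxA, hxL⟩
    rw [hchar 1, conjSubgroup_one] at this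
    exact this
  · rw [powSubgroup, Subgroup.closure_le]
    rintro x ⟨a, haA, rfl⟩
    refine ⟨Subgroup.pow_mem A haA n, (hmem (a ^ n)).mpr fun g => ?_⟩
    have hmemconj : g⁻¹ * a * g ∈ conjSubgroup g A := ⟨a, haA, by simp⟩
    have : (g⁻¹ * a * g) ^ n ∈ powSubgroup n (conjSubgroup g A) :=
      Subgroup.subset_closure ⟨g⁻¹ * a * g, hmemconj, rfl⟩
    rw [← hchar g] at this
    rw [conj_pow_eq] at this
    exact this.2
end

section
/- Let G be a group acting on a tree T, and suppose a ∈ G is hyperbolic (fixes no vertex). Then there is a unique minimal ⟨a⟩-invariant subtree T_a of T, the vertices of T_a are exactly the vertices v minimizing the distance d(v, a·v), and a acts on T_a as a translation of amplitude m = min_v d(v, a·v). -/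
namespace HypAux
open SimpleGraph Walk

variable {V : Type*} {T : SimpleGraph V}

lemma path_len (hT : T.IsTree) {u v : V} {p : T.Walk u v} (hp : p.IsPath) :
    p.length = T.dist u v := by
  obtain ⟨q, hq, hl⟩ := hT.isConnected.exists_path_of_dist u v
  rw [(hT.existsUnique_path u v).unique hp hq, hl]

/-- the canonical geodesic in a tree -/
noncomputable def geo (hT : T.IsTree) (u v : V) : T.Walk u v :=
  (hT.existsUnique_path u v).choose

lemma geo_isPath (hT : T.IsTree) (u v : V) : (geo hT u v).IsPath :=
  (hT.existsUnique_path u v).choose_spec.1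

lemma geo_eq (hT : T.IsTree) {u v : V} {p : T.Walk u v} (hp : p.IsPath) :
    p = geo hT u v :=
  (hT.existsUnique_path u v).choose_spec.2 p hp

lemma geo_len (hT : T.IsTree) (u v : V) : (geo hT u v).length = T.dist u v :=
  path_len hT (geo_isPath hT u v)

/-- appending paths sharing only the junction gives a path -/
lemma share_append {u w z : V} {p : T.Walk u w} {q : T.Walk w z}
    (hp : p.IsPath) (hq : q.IsPath)
    (h : ∀ x, x ∈ p.support → x ∈ q.support → x = w) :
    (p.append q).IsPath := by
  rw [isPath_def, support_append, List.nodup_append]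
  refine ⟨hp.2, hq.2.tail, ?_⟩
  intro x hx y hx' hxy
  subst hxy
  have hxq : x ∈ q.support := List.mem_of_mem_tail hx'
  have hxw := h x hx hxq
  subst hxw
  have := hq.2
  rw [support_eq_cons] at this
  exact (List.nodup_cons.mp this).1 hx'

/-- splitting a path at an interior vertex: distances add -/
lemma split_at (hT : T.IsTree) {u t : V} {p : T.Walk u t} (hp : p.IsPath)
    {z : V} (hz : z ∈ p.support) :
    T.dist u z + T.dist z t = T.dist u t := by
  classical
  classical
  classical
  have h1 := path_len hT (hp.takeUntil hz)
  have h2 := path_len hT (hp.dropUntil hz)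
  have h3 := path_len hT hp
  have h4 := congrArg Walk.length (p.take_spec hz)
  rw [length_append] at h4
  omega

lemma dist_pos_of_ne (hT : T.IsTree) {x y : V} (h : x ≠ y) : 0 < T.dist x y :=
  Nat.pos_of_ne_zero fun h0 => h (hT.isConnected.dist_eq_zero_iff.mp h0)

lemma eq_of_dist_eq_zero (hT : T.IsTree) {x y : V} (h : T.dist x y = 0) : x = y :=
  hT.isConnected.dist_eq_zero_iff.mp h

/-- betweenness from additivity of distance -/
lemma mem_geo_of_dist_add (hT : T.IsTree) {u w z : V}
    (h : T.dist u w + T.dist w z = T.dist u z) : w ∈ (geo hT u z).support := by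
  by_cases hsh : ∀ x, x ∈ (geo hT u w).support → x ∈ (geo hT w z).support → x = w
  · have hpath := share_append (geo_isPath hT u w) (geo_isPath hT w z) hsh
    have := geo_eq hT hpath
    rw [← this]
    rw [mem_support_append_iff]
    left; exact end_mem_support _
  · push_neg at hsh
    obtain ⟨x, hx1, hx2, hxw⟩ := hsh
    have e1 := split_at hT (geo_isPath hT u w) hx1
    have e2 := split_at hT (geo_isPath hT w z) hx2
    have e3 : T.dist u z ≤ T.dist u x + T.dist x z :=
      hT.isConnected.dist_triangle
    have e4 : 0 < T.dist x w := dist_pos_of_ne hT hxw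
    have e5 : T.dist w x = T.dist x w := SimpleGraph.dist_comm ..
    omega

/-- the geodesic between two vertices on a path is inside the path -/
lemma geo_sub (hT : T.IsTree) {u t : V} {p : T.Walk u t} (hp : p.IsPath)
    {x1 x2 : V} (h1 : x1 ∈ p.support) (h2 : x2 ∈ p.support) :
    ∀ z ∈ (geo hT x1 x2).support, z ∈ p.support := by
  classical
  intro z hz
  set w0 : T.Walk x1 x2 := (p.takeUntil x1 h1).reverse.append (p.takeUntil x2 h2) with hw0
  have hsub : ∀ y ∈ w0.support, y ∈ p.support := by
    intro y hy
    rw [hw0, mem_support_append_iff] at hy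
    rcases hy with hy | hy
    · rw [support_reverse, List.mem_reverse] at hy
      exact support_takeUntil_subset _ _ hy
    · exact support_takeUntil_subset _ _ hy
  have hb : w0.bypass.IsPath := bypass_isPath w0
  have : w0.bypass = geo hT x1 x2 := geo_eq hT hb
  rw [← this] at hz
  exact hsub z (support_bypass_subset _ hz)

/-- positions along a geodesic determine distances -/
lemma pos_dist (hT : T.IsTree) {u t : V} {p : T.Walk u t} (hp : p.IsPath)
    {x1 x2 : V} (h1 : x1 ∈ p.support) (h2 : x2 ∈ p.support)
    (hle : T.dist u x1 ≤ T.dist u x2) :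
    T.dist u x1 + T.dist x1 x2 = T.dist u x2 := by
  classical
  have hsp := p.take_spec h1
  have hx2' : x2 ∈ (p.takeUntil x1 h1).support ∨ x2 ∈ (p.dropUntil x1 h1).support := by
    rw [← mem_support_append_iff, hsp]; exact h2
  rcases hx2' with hc | hc
  · have e1 := split_at hT (hp.takeUntil h1) hc
    have e2 : T.dist u x2 + T.dist x2 x1 = T.dist u x1 := e1
    have e5 : T.dist x1 x2 = T.dist x2 x1 := SimpleGraph.dist_comm ..
    omega
  · have e1 := split_at hT (hp.dropUntil h1) hc
    have e2 := split_at hT hp h1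
    have e3 := split_at hT hp h2
    omega


section Action
variable {G : Type*} [Group G] [MulAction G V]

/-- the action by a single group element as a graph isomorphism -/
def actIso (hact : ∀ (g : G) (u v : V), T.Adj u v ↔ T.Adj (g • u) (g • v)) (g : G) :
    T ≃g T :=
  ⟨MulAction.toPerm g, by intro u v; exact (hact g u v).symm⟩

lemma dist_smul_le (hT : T.IsTree)
    (hact : ∀ (g : G) (u v : V), T.Adj u v ↔ T.Adj (g • u) (g • v)) (g : G) (u v : V) :
    T.dist (g • u) (g • v) ≤ T.dist u v := by
  obtain ⟨p, hp, hl⟩ := hT.isConnected.exists_path_of_dist u v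
  have := SimpleGraph.dist_le (p.map (actIso hact g).toHom)
  rwa [Walk.length_map, hl] at this

lemma dist_smul (hT : T.IsTree)
    (hact : ∀ (g : G) (u v : V), T.Adj u v ↔ T.Adj (g • u) (g • v)) (g : G) (u v : V) :
    T.dist (g • u) (g • v) = T.dist u v := by
  refine le_antisymm (dist_smul_le hT hact g u v) ?_
  have := dist_smul_le hT hact g⁻¹ (g • u) (g • v)
  simpa using this

lemma mem_geo_smul (hT : T.IsTree)
    (hact : ∀ (g : G) (u v : V), T.Adj u v ↔ T.Adj (g • u) (g • v)) (g : G) (u v x : V) :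
    x ∈ (geo hT (g • u) (g • v)).support ↔ ∃ y ∈ (geo hT u v).support, g • y = x := by
  have hinj : Function.Injective (⇑(actIso hact g).toHom) :=
    (MulAction.toPerm g).injective
  have hp : ((geo hT u v).map (actIso hact g).toHom).IsPath :=
    Walk.map_isPath_of_injective hinj (geo_isPath hT u v)
  have he : (geo hT u v).map (actIso hact g).toHom = geo hT (g • u) (g • v) :=
    geo_eq hT hp
  have key : x ∈ ((geo hT u v).map (actIso hact g).toHom).support ↔
      ∃ y ∈ (geo hT u v).support, (actIso hact g).toHom y = x := by
    rw [Walk.support_map, List.mem_map]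
  rw [← he]
  exact key

end Action

lemma reach_induce {s : Set V} {x y : V} (w : T.Walk x y)
    (hw : ∀ z ∈ w.support, z ∈ s) (hx : x ∈ s) (hy : y ∈ s) :
    (T.induce s).Reachable ⟨x, hx⟩ ⟨y, hy⟩ := by
  induction w with
  | nil => exact Reachable.refl _
  | @cons x u y h p ih =>
    have hu : u ∈ s := hw u (by simp)
    have hadj : (T.induce s).Adj ⟨x, hx⟩ ⟨u, hu⟩ := by simpa using h
    exact hadj.reachable.trans (ih (fun z hz => hw z (by simp [hz])) hu hy)

lemma walk_of_induce {s : Set V} {x y : ↥s} (w : (T.induce s).Walk x y) :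
    ∃ p : T.Walk x y, ∀ z ∈ p.support, z ∈ s := by
  induction w with
  | nil => exact ⟨Walk.nil, by simpa using (Subtype.mem _)⟩
  | @cons x u y h p ih =>
    obtain ⟨q, hq⟩ := ih
    refine ⟨Walk.cons (by simpa using h) q, ?_⟩
    intro z hz
    rw [Walk.support_cons, List.mem_cons] at hz
    rcases hz with rfl | hz
    · exact Subtype.mem x
    · exact hq z hz

lemma geo_closure (hT : T.IsTree) {s : Set V} (hc : (T.induce s).Connected)
    {x y : V} (hx : x ∈ s) (hy : y ∈ s) :
    ∀ z ∈ (geo hT x y).support, z ∈ s := by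
  classical
  obtain ⟨w⟩ := hc.preconnected ⟨x, hx⟩ ⟨y, hy⟩
  obtain ⟨p, hp⟩ := walk_of_induce w
  have he : p.bypass = geo hT x y := geo_eq hT p.bypass_isPath
  intro z hz
  rw [← he] at hz
  exact hp z (p.support_bypass_subset hz)

end HypAux

open HypAux SimpleGraph

/-- Tits' classification of hyperbolic tree automorphisms: if a group `G` acts on a
tree `T` and `a ∈ G` fixes no vertex, then the set `S` of vertices minimizing
`d(v, a·v)` is the vertex set of an `⟨a⟩`-invariant subtree on which `a` translates
with amplitude `m = min_v d(v, a·v)`, and `S` is contained in every `⟨a⟩`-invariant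
subtree (so it is the unique minimal one). -/
theorem hyperbolic_axis {V : Type u} (T : SimpleGraph V) (hT : T.IsTree)
    {G : Type v} [Group G] [MulAction G V]
    (hact : ∀ (g : G) (u v : V), T.Adj u v ↔ T.Adj (g • u) (g • v))
    (a : G) (ha : ∀ v : V, a • v ≠ v)
    (m : ℕ) (hm : IsLeast {d : ℕ | ∃ v : V, T.dist v (a • v) = d} m) :
    (({v : V | T.dist v (a • v) = m} : Set V).Nonempty ∧
      (T.induce {v : V | T.dist v (a • v) = m}).Connected ∧
      (∀ v ∈ {v : V | T.dist v (a • v) = m}, a • v ∈ {v : V | T.dist v (a • v) = m}) ∧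
      (∀ v ∈ {v : V | T.dist v (a • v) = m}, a⁻¹ • v ∈ {v : V | T.dist v (a • v) = m})) ∧
    ∀ S' : Set V, S'.Nonempty → (T.induce S').Connected →
      (∀ v ∈ S', a • v ∈ S') → (∀ v ∈ S', a⁻¹ • v ∈ S') →
      {v : V | T.dist v (a • v) = m} ⊆ S' := by
  classical
  have conn := hT.isConnected
  have ds : ∀ (g : G) (u v : V), T.dist (g • u) (g • v) = T.dist u v :=
    dist_smul hT hact
  have hcomm : ∀ n : ℤ, a * a ^ n = a ^ n * a := by
    intro n; rw [← zpow_one_add, ← zpow_add_one, add_comm]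
  have hmix : ∀ (n : ℤ) (x : V), a • ((a ^ n) • x) = (a ^ n) • (a • x) := by
    intro n x; rw [smul_smul, smul_smul, hcomm]
  have hm2 : ∀ w : V, m ≤ T.dist w (a • w) := fun w => hm.2 ⟨w, rfl⟩
  obtain ⟨v₀, hv₀⟩ := hm.1
  have m1 : 1 ≤ m := by
    rcases Nat.eq_zero_or_pos m with h0 | h
    · exfalso
      exact ha v₀ ((eq_of_dist_eq_zero hT (by omega)).symm)
    · exact h
  -- every vertex on the geodesic from a minimizer to its image is a minimizer
  have memS : ∀ v : V, T.dist v (a • v) = m →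
      ∀ z ∈ (geo hT v (a • v)).support, T.dist z (a • z) = m := by
    intro v hv z hz
    have hsp := split_at hT (geo_isPath hT v (a • v)) hz
    refine le_antisymm ?_ (hm2 z)
    have t1 : T.dist z (a • z) ≤ T.dist z (a • v) + T.dist (a • v) (a • z) :=
      conn.dist_triangle
    have t2 : T.dist (a • v) (a • z) = T.dist v z := ds a v z
    omega
  set P0 := geo hT v₀ (a • v₀) with hP0
  set L : Set V := {x | ∃ n : ℤ, (a ^ n) • x ∈ P0.support} with hLdef
  have hv₀L : v₀ ∈ L := ⟨0, by simpa using P0.start_mem_support⟩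
  have hpowL : ∀ k : ℤ, (a ^ k) • v₀ ∈ L := by
    intro k
    refine ⟨-k, ?_⟩
    rw [smul_smul, ← zpow_add]
    simpa using P0.start_mem_support
  have hLS : ∀ x ∈ L, T.dist x (a • x) = m := by
    rintro x ⟨n, hn⟩
    have h1 : T.dist ((a ^ n) • x) (a • ((a ^ n) • x)) = m := memS v₀ hv₀ _ hn
    rw [hmix, ds] at h1
    exact h1
  have hLa : ∀ x ∈ L, a • x ∈ L := by
    rintro x ⟨n, hn⟩
    refine ⟨n - 1, ?_⟩
    rw [smul_smul, ← zpow_add_one, sub_add_cancel]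
    exact hn
  have hLainv : ∀ x ∈ L, a⁻¹ • x ∈ L := by
    rintro x ⟨n, hn⟩
    refine ⟨n + 1, ?_⟩
    rw [smul_smul]
    have : a ^ (n + 1) * a⁻¹ = a ^ n := by
      rw [zpow_add_one, mul_assoc, mul_inv_cancel, mul_one]
    rw [this]
    exact hn
  -- induced connectivity of L
  have hstep : ∀ k : ℤ,
      (T.induce L).Reachable ⟨(a ^ k) • v₀, hpowL k⟩ ⟨(a ^ (k + 1)) • v₀, hpowL (k + 1)⟩ := by
    intro k
    have hW : ∀ z ∈ (P0.map (actIso hact (a ^ k)).toHom).support, z ∈ L := by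
      intro z hz
      rw [Walk.support_map, List.mem_map] at hz
      obtain ⟨y, hy, hyz⟩ := hz
      refine ⟨-k, ?_⟩
      have : (a ^ (-k)) • z = y := by
        rw [← hyz]
        show (a ^ (-k)) • ((a ^ k) • y) = y
        rw [smul_smul, ← zpow_add]
        simp
      rw [this]; exact hy
    have he : (a ^ k) • (a • v₀) = (a ^ (k + 1)) • v₀ := by
      rw [smul_smul, ← zpow_add_one]
    have hmem : (a ^ k) • (a • v₀) ∈ L := he ▸ hpowL (k + 1)
    have h1 := reach_induce (P0.map (actIso hact (a ^ k)).toHom) hW (hpowL k) hmem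
    have h1' : (T.induce L).Reachable ⟨(a ^ k) • v₀, hpowL k⟩ ⟨(a ^ k) • (a • v₀), hmem⟩ := h1
    have h2 : (⟨(a ^ k) • (a • v₀), hmem⟩ : ↥L) = ⟨(a ^ (k + 1)) • v₀, hpowL (k + 1)⟩ :=
      Subtype.ext he
    rwa [h2] at h1'
  have hstep' : ∀ k l : ℤ, l = k + 1 →
      (T.induce L).Reachable ⟨(a ^ k) • v₀, hpowL k⟩ ⟨(a ^ l) • v₀, hpowL l⟩ := by
    intro k l hl; subst hl; exact hstep k
  have hbase : ∀ n : ℤ, (T.induce L).Reachable ⟨(a ^ n) • v₀, hpowL n⟩ ⟨v₀, hv₀L⟩ := by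
    intro n
    induction n using Int.induction_on with
    | zero =>
      have h0 : ((⟨(a ^ (0 : ℤ)) • v₀, hpowL 0⟩ : ↥L)) = ⟨v₀, hv₀L⟩ :=
        Subtype.ext (by simp)
      rw [h0]
    | succ k ih => exact ((hstep' k (k + 1) rfl).symm.trans ih)
    | pred k ih => exact ((hstep' (-k - 1) (-k) (by ring)).trans ih)
  have hLreach : ∀ (x : V) (hx : x ∈ L),
      (T.induce L).Reachable ⟨x, hx⟩ ⟨v₀, hv₀L⟩ := by
    intro x hx
    obtain ⟨n, hn⟩ := id hx
    have hq := (geo_isPath hT v₀ (a • v₀)).takeUntil hn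
    set q := (P0.takeUntil _ hn).map (actIso hact (a ^ (-n))).toHom with hqdef
    have hWq : ∀ z ∈ q.support, z ∈ L := by
      intro z hz
      rw [hqdef, Walk.support_map, List.mem_map] at hz
      obtain ⟨y, hy, hyz⟩ := hz
      refine ⟨n, ?_⟩
      have : (a ^ n) • z = y := by
        rw [← hyz]
        show (a ^ n) • ((a ^ (-n)) • y) = y
        rw [smul_smul, ← zpow_add]
        simp
      rw [this]
      exact P0.support_takeUntil_subset hn hy
    have hend : (a ^ (-n : ℤ)) • ((a ^ n) • x) = x := by
      rw [smul_smul, ← zpow_add]; simp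
    have hmem : (a ^ (-n : ℤ)) • ((a ^ n) • x) ∈ L := by rw [hend]; exact hx
    have h1 := reach_induce q hWq (hpowL (-n)) hmem
    have h1' : (T.induce L).Reachable ⟨(a ^ (-n : ℤ)) • v₀, hpowL (-n)⟩
        ⟨(a ^ (-n : ℤ)) • ((a ^ n) • x), hmem⟩ := h1
    have h2 : (⟨(a ^ (-n : ℤ)) • ((a ^ n) • x), hmem⟩ : ↥L) = ⟨x, hx⟩ := Subtype.ext hend
    rw [h2] at h1'
    exact h1'.symm.trans (hbase (-n))
  have Lconn : (T.induce L).Connected := by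
    rw [connected_iff]
    refine ⟨?_, ⟨⟨v₀, hv₀L⟩⟩⟩
    rintro ⟨x, hx⟩ ⟨y, hy⟩
    exact (hLreach x hx).trans (hLreach y hy).symm
  have LGC : ∀ {x y : V}, x ∈ L → y ∈ L → ∀ z ∈ (geo hT x y).support, z ∈ L :=
    fun hx hy => geo_closure hT Lconn hx hy
  -- the main decomposition via the gate
  have DEC : ∀ w : V, ∃ y ∈ L, T.dist w (a • w) = 2 * T.dist w y + m ∧
      ∀ z ∈ (geo hT y (a • y)).support, z ∈ (geo hT w (a • w)).support := by
    intro w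
    set ks : Set ℕ := {k | ∃ z ∈ L, T.dist w z = k} with hks
    have hne : ks.Nonempty := ⟨T.dist w v₀, v₀, hv₀L, rfl⟩
    obtain ⟨y, hyL, hyk⟩ := Nat.sInf_mem hne
    have hmin : ∀ z ∈ L, sInf ks ≤ T.dist w z := fun z hz => Nat.sInf_le ⟨z, hz, rfl⟩
    have G : ∀ z ∈ L, T.dist w z = T.dist w y + T.dist y z := by
      intro z hz
      by_cases hsh : ∀ x, x ∈ (geo hT w y).support → x ∈ (geo hT y z).support → x = y
      · have hpa := share_append (geo_isPath hT w y) (geo_isPath hT y z) hsh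
        have hlen := path_len hT hpa
        rw [Walk.length_append, geo_len, geo_len] at hlen
        omega
      · exfalso
        push_neg at hsh
        obtain ⟨x, hx1, hx2, hxy⟩ := hsh
        have hxL : x ∈ L := LGC hyL hz x hx2
        have e1 := split_at hT (geo_isPath hT w y) hx1
        have e2 := hmin x hxL
        have e3 : 0 < T.dist x y := dist_pos_of_ne hT hxy
        omega
    have G' : ∀ z ∈ L, T.dist (a • w) z = sInf ks + T.dist (a • y) z := by
      intro z hz
      have hz' : a⁻¹ • z ∈ L := hLainv z hz
      have hG := G _ hz'
      have h1 : T.dist w (a⁻¹ • z) = T.dist (a • w) z := by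
        rw [← ds a w (a⁻¹ • z), smul_inv_smul]
      have h2 : T.dist y (a⁻¹ • z) = T.dist (a • y) z := by
        rw [← ds a y (a⁻¹ • z), smul_inv_smul]
      rw [h1, h2, hyk] at hG
      exact hG
    have hyS : T.dist y (a • y) = m := hLS y hyL
    have hp2L : ∀ z ∈ (geo hT y (a • y)).support, z ∈ L := LGC hyL (hLa y hyL)
    have hq : ((geo hT w y).append (geo hT y (a • y))).IsPath := by
      apply share_append (geo_isPath hT w y) (geo_isPath hT y (a • y))
      intro x hx1 hx2
      have hxL : x ∈ L := hp2L x hx2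
      have e1 := split_at hT (geo_isPath hT w y) hx1
      have e2 := hmin x hxL
      have e0 : T.dist x y = 0 := by omega
      exact eq_of_dist_eq_zero hT e0
    have hdway : T.dist w (a • y) = sInf ks + m := by
      have := path_len hT hq
      rw [Walk.length_append, geo_len, geo_len, hyk, hyS] at this
      omega
    have hp3k : T.dist (a • y) (a • w) = sInf ks := by
      rw [ds, SimpleGraph.dist_comm, hyk]
    have hr : (((geo hT w y).append (geo hT y (a • y))).append
        (geo hT (a • y) (a • w))).IsPath := by
      apply share_append hq (geo_isPath hT (a • y) (a • w))
      intro x hx1 hx3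
      rw [Walk.mem_support_append_iff] at hx1
      have ep3 := split_at hT (geo_isPath hT (a • y) (a • w)) hx3
      rw [hp3k] at ep3
      rcases hx1 with hx1 | hx2
      · -- x on [w,y] : contradiction with m ≥ 1
        exfalso
        have e1 := split_at hT (geo_isPath hT w y) hx1
        rw [hyk] at e1
        have t1 : T.dist w (a • y) ≤ T.dist w x + T.dist x (a • y) := conn.dist_triangle
        have t2 : T.dist (a • w) y = sInf ks + m := by
          have hGy := G' y hyL
          have c0 : T.dist (a • y) y = T.dist y (a • y) := SimpleGraph.dist_comm
          omega
        have t3 : T.dist (a • w) y ≤ T.dist (a • w) x + T.dist x y := conn.dist_triangle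
        have c1 : T.dist x (a • y) = T.dist (a • y) x := SimpleGraph.dist_comm
        have c2 : T.dist (a • w) x = T.dist x (a • w) := SimpleGraph.dist_comm
        omega
      · -- x on [y, a•y] ⊆ L
        have hxL : x ∈ L := hp2L x hx2
        have hGx := G' x hxL
        have c1 : T.dist x (a • w) = T.dist (a • w) x := SimpleGraph.dist_comm
        have e0 : T.dist (a • y) x = 0 := by omega
        exact (eq_of_dist_eq_zero hT e0).symm
    have hDw : T.dist w (a • w) = 2 * sInf ks + m := by
      have := path_len hT hr
      rw [Walk.length_append, Walk.length_append, geo_len, geo_len, geo_len,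
        hyk, hyS, hp3k] at this
      omega
    refine ⟨y, hyL, by rw [hyk]; exact hDw, ?_⟩
    intro z hz
    have hgeq := geo_eq hT hr
    rw [← hgeq, Walk.mem_support_append_iff, Walk.mem_support_append_iff]
    exact Or.inl (Or.inr hz)
  -- S = L
  have SL : ∀ w : V, T.dist w (a • w) = m → w ∈ L := by
    intro w hw
    obtain ⟨y, hyL, hdec, -⟩ := DEC w
    have h0 : T.dist w y = 0 := by omega
    rw [eq_of_dist_eq_zero hT h0]
    exact hyL
  have hSeq : {v : V | T.dist v (a • v) = m} = L :=
    Set.ext fun v => ⟨fun hv => SL v hv, fun hv => hLS v hv⟩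
  refine ⟨⟨⟨v₀, hv₀⟩, ?_, ?_, ?_⟩, ?_⟩
  · rw [hSeq]; exact Lconn
  · intro v hv
    simp only [Set.mem_setOf_eq] at hv ⊢
    rw [ds]
    exact hv
  · intro v hv
    simp only [Set.mem_setOf_eq] at hv ⊢
    have h1 := ds a (a⁻¹ • v) v
    rw [smul_inv_smul] at h1
    rw [smul_inv_smul, ← h1]
    exact hv
  · intro S' hS'ne hS'conn hS'a hS'ainv
    obtain ⟨w, hw⟩ := hS'ne
    obtain ⟨y, hyL, hdec, hsub⟩ := DEC w
    have hgeoS' : ∀ z ∈ (geo hT w (a • w)).support, z ∈ S' :=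
      geo_closure hT hS'conn hw (hS'a w hw)
    have hyaS' : ∀ z ∈ (geo hT y (a • y)).support, z ∈ S' :=
      fun z hz => hgeoS' z (hsub z hz)
    have ZC : ∀ (n : ℤ) (x : V), x ∈ S' → (a ^ n) • x ∈ S' := by
      intro n
      induction n using Int.induction_on with
      | zero => intro x hx; simpa using hx
      | succ i ih =>
        intro x hx
        have he : (a ^ ((i : ℤ) + 1)) • x = a • ((a ^ (i : ℤ)) • x) := by
          rw [smul_smul, hcomm, ← zpow_add_one]
        rw [he]
        exact hS'a _ (ih x hx)
      | pred i ih =>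
        intro x hx
        have he : (a ^ (-(i : ℤ) - 1)) • x = a⁻¹ • ((a ^ (-(i : ℤ))) • x) := by
          rw [smul_smul]
          congr 1
          rw [← zpow_neg_one, ← zpow_add, add_comm]
          ring_nf
        rw [he]
        exact hS'ainv _ (ih x hx)
    intro s hs
    simp only [Set.mem_setOf_eq] at hs
    have hsL : s ∈ L := SL s hs
    obtain ⟨i, hi⟩ := hsL
    obtain ⟨j, hj⟩ := id hyL
    set z := (a ^ i) • s with hz
    set yb := (a ^ j) • y with hyb
    have hzS : T.dist z (a • z) = m := memS v₀ hv₀ _ hi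
    have hybS : T.dist yb (a • yb) = m := memS v₀ hv₀ _ hj
    have hsplz : T.dist v₀ z + T.dist z (a • v₀) = m := by
      have := split_at hT (geo_isPath hT v₀ (a • v₀)) hi
      rw [hv₀] at this
      exact this
    have hsply : T.dist v₀ yb + T.dist yb (a • v₀) = m := by
      have := split_at hT (geo_isPath hT v₀ (a • v₀)) hj
      rw [hv₀] at this
      exact this
    have hayb : a • yb = (a ^ j) • (a • y) := hmix j y
    have key : ∃ x ∈ (geo hT y (a • y)).support, ∃ n : ℤ, s = (a ^ n) • x := by
      rcases le_total (T.dist v₀ yb) (T.dist v₀ z) with hc | hc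
      · -- yb before z : z itself lies on [yb, a•yb]
        have hpos := pos_dist hT (geo_isPath hT v₀ (a • v₀)) hj hi hc
        have t1 : T.dist z (a • yb) ≤ T.dist z (a • v₀) + T.dist (a • v₀) (a • yb) :=
          conn.dist_triangle
        have t1' : T.dist (a • v₀) (a • yb) = T.dist v₀ yb := ds a v₀ yb
        have t2 : T.dist yb (a • yb) ≤ T.dist yb z + T.dist z (a • yb) :=
          conn.dist_triangle
        have heq : T.dist yb z + T.dist z (a • yb) = T.dist yb (a • yb) := by omega
        have hzmem : z ∈ (geo hT yb (a • yb)).support := mem_geo_of_dist_add hT heq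
        rw [hayb] at hzmem
        obtain ⟨x, hxsup, hxz⟩ := (mem_geo_smul hT hact (a ^ j) y (a • y) z).mp hzmem
        refine ⟨x, hxsup, -i + j, ?_⟩
        have : (a ^ (-i : ℤ)) • ((a ^ i) • s) = (a ^ (-i : ℤ)) • ((a ^ j) • x) := by
          rw [← hz, hxz]
        rw [smul_smul, smul_smul, ← zpow_add, ← zpow_add] at this
        simpa using this
      · -- z before yb : a•z lies on [yb, a•yb]
        have hpos := pos_dist hT (geo_isPath hT v₀ (a • v₀)) hi hj hc
        have t1 : T.dist yb (a • z) ≤ T.dist yb (a • v₀) + T.dist (a • v₀) (a • z) :=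
          conn.dist_triangle
        have t1' : T.dist (a • v₀) (a • z) = T.dist v₀ z := ds a v₀ z
        have t2' : T.dist (a • z) (a • yb) = T.dist z yb := ds a z yb
        have t2 : T.dist yb (a • yb) ≤ T.dist yb (a • z) + T.dist (a • z) (a • yb) :=
          conn.dist_triangle
        have heq : T.dist yb (a • z) + T.dist (a • z) (a • yb) = T.dist yb (a • yb) := by
          omega
        have hzmem : a • z ∈ (geo hT yb (a • yb)).support := mem_geo_of_dist_add hT heq
        rw [hayb] at hzmem
        obtain ⟨x, hxsup, hxz⟩ := (mem_geo_smul hT hact (a ^ j) y (a • y) (a • z)).mp hzmem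
        refine ⟨x, hxsup, -(i + 1) + j, ?_⟩
        have haz : a • z = (a ^ (i + 1 : ℤ)) • s := by
          rw [hz, smul_smul, hcomm, ← zpow_add_one]
        have : (a ^ (-(i + 1) : ℤ)) • ((a ^ (i + 1 : ℤ)) • s)
            = (a ^ (-(i + 1) : ℤ)) • ((a ^ j) • x) := by
          rw [← haz, hxz]
        have e0 : (-(i + 1) : ℤ) + (i + 1) = 0 := by ring
        rw [smul_smul, smul_smul, ← zpow_add, ← zpow_add, e0, zpow_zero, one_smul] at this
        exact this
    obtain ⟨x, hxsup, n, hsn⟩ := key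
    rw [hsn]
    exact ZC n x (hyaS' x hxsup)
end
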